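/- Let k and N be positive integers. Then Σ ∏_{i=1}^{l} (-1)^{k_i - 1} · C(k_i + N - 1, k_i) = C(N, k), where the sum ranges over all compositions (k_1, …, k_l) of k (of all lengths l ≥ 1). In particular the left-hand side equals 1 when k = N and equals 0 when k > N. -/

import Mathlib

open PowerSeries Finset

-- Step 1: power series identity
lemma myPS (N : ℕ) (hN : 0 < N) :
    (PowerSeries.mk fun n => (-1 : ℤ) ^ n * ((n + N - 1).choose n : ℤ)) *
      (1 + PowerSeries.X) ^ N = 1 := by
  have h := (PowerSeries.invOneSubPow ℤ N).val_inv
  rw [PowerSeries.invOneSubPow_val_eq_mk_sub_one_add_choose_of_pos ℤ (d := N) hN,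
      PowerSeries.invOneSubPow_inv_eq_one_sub_pow] at h
  have h2 := congrArg (PowerSeries.rescale (-1 : ℤ)) h
  rw [map_mul, map_pow, map_one] at h2
  have e1 : PowerSeries.rescale (-1 : ℤ)
      (PowerSeries.mk fun n => ((N - 1 + n).choose (N - 1) : ℤ))
      = PowerSeries.mk fun n => (-1 : ℤ) ^ n * ((n + N - 1).choose n : ℤ) := by
    ext n
    rw [PowerSeries.coeff_rescale]
    simp only [PowerSeries.coeff_mk]
    congr 2
    have h1 : N - 1 + n = n + N - 1 := by omega
    rw [h1]
    have h3 : N - 1 ≤ n + N - 1 := by omega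
    have := Nat.choose_symm h3
    rw [show n + N - 1 - (N - 1) = n by omega] at this
    exact this.symm
  have e2 : PowerSeries.rescale (-1 : ℤ) (1 - PowerSeries.X) = 1 + PowerSeries.X := by
    ext n
    rw [PowerSeries.coeff_rescale]
    simp only [map_sub, map_add, PowerSeries.coeff_one, PowerSeries.coeff_X]
    rcases n with _ | _ | n <;> simp
  rw [e1, e2] at h2
  exact h2

-- Step 2: convolution identity
lemma myConv (N k : ℕ) (hN : 0 < N) (hk : 0 < k) :
    ∑ i ∈ Finset.range (k + 1),
      (-1 : ℤ) ^ i * ((i + N - 1).choose i : ℤ) * (N.choose (k - i) : ℤ) = 0 := by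
  have h := congrArg (PowerSeries.coeff (R := ℤ) k) (myPS N hN)
  rw [PowerSeries.coeff_mul, PowerSeries.coeff_one, if_neg hk.ne'] at h
  rw [Finset.Nat.sum_antidiagonal_eq_sum_range_succ
    (fun a b => (PowerSeries.coeff (R := ℤ) a)
        (PowerSeries.mk fun n => (-1 : ℤ) ^ n * ((n + N - 1).choose n : ℤ)) *
      (PowerSeries.coeff (R := ℤ) b) ((1 + PowerSeries.X) ^ N))] at h
  rw [← h]
  apply Finset.sum_congr rfl
  intro i _
  rw [PowerSeries.coeff_mk]
  congr 1
  have : ((1 + PowerSeries.X : ℤ⟦X⟧) ^ N) = ((1 + Polynomial.X : Polynomial ℤ) ^ N : Polynomial ℤ) := by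
    push_cast
    simp
  rw [this, Polynomial.coeff_coe, Polynomial.coeff_one_add_X_pow]

-- Step 3: composition facts
lemma myHead {k : ℕ} (hk : 0 < k) (c : Composition k) :
    0 < c.blocks.headI ∧ c.blocks.headI + c.blocks.tail.sum = k ∧
      c.blocks.headI :: c.blocks.tail = c.blocks := by
  have hs := c.blocks_sum
  cases h : c.blocks with
  | nil => rw [h] at hs; simp at hs; omega
  | cons b t =>
      have hb : 0 < b := c.blocks_pos (by rw [h]; exact List.mem_cons_self)
      rw [h] at hs
      simp at hs ⊢
      omega

lemma mySigmaExt {k : ℕ} {p q : Σ j : Fin k, Composition j.val}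
    (h1 : p.1 = q.1) (h2 : p.2.blocks = q.2.blocks) : p = q := by
  obtain ⟨j1, c1⟩ := p
  obtain ⟨j2, c2⟩ := q
  dsimp at h1
  subst h1
  exact congrArg (Sigma.mk j1) (Composition.ext h2)

def compEquiv (k : ℕ) (hk : 0 < k) : Composition k ≃ Σ j : Fin k, Composition j.val where
  toFun c :=
    ⟨⟨k - c.blocks.headI, by have := myHead hk c; omega⟩,
      { blocks := c.blocks.tail
        blocks_pos := fun hi => c.blocks_pos (List.mem_of_mem_tail hi)
        blocks_sum := by
          show c.blocks.tail.sum = k - c.blocks.headI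
          have := myHead hk c; omega }⟩
  invFun p :=
    { blocks := (k - p.1.val) :: p.2.blocks
      blocks_pos := by
        intro i hi
        rcases List.mem_cons.1 hi with rfl | hi
        · have := p.1.isLt; omega
        · exact p.2.blocks_pos hi
      blocks_sum := by
        have := p.1.isLt
        simp only [List.sum_cons, p.2.blocks_sum]
        omega }
  left_inv c := by
    obtain ⟨h1, h2, h3⟩ := myHead hk c
    apply Composition.ext
    show (k - (k - c.blocks.headI)) :: c.blocks.tail = c.blocks
    rw [show k - (k - c.blocks.headI) = c.blocks.headI from by omega, h3]
  right_inv p := by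
    obtain ⟨j, c⟩ := p
    apply mySigmaExt
    · apply Fin.ext
      simp only [List.headI_cons]
      have := j.isLt
      omega
    · rfl

lemma compRec (N k : ℕ) (hk : 0 < k) :
    (∑ c : Composition k,
        (c.blocks.map fun ki =>
          (-1 : ℤ) ^ (ki - 1) * ((ki + N - 1).choose ki : ℤ)).prod)
    = ∑ j ∈ Finset.range k,
        ((-1 : ℤ) ^ (k - j - 1) * (((k - j) + N - 1).choose (k - j) : ℤ)) *
          ∑ c : Composition j,
            (c.blocks.map fun ki =>
              (-1 : ℤ) ^ (ki - 1) * ((ki + N - 1).choose ki : ℤ)).prod := by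
  rw [← Equiv.sum_comp (compEquiv k hk).symm]
  rw [← Finset.univ_sigma_univ, Finset.sum_sigma]
  rw [← Fin.sum_univ_eq_sum_range]
  apply Finset.sum_congr rfl
  intro j _
  rw [Finset.mul_sum]
  apply Finset.sum_congr rfl
  intro c _
  simp [compEquiv, List.map_cons, List.prod_cons]

lemma compZero (N : ℕ) :
    (∑ c : Composition 0,
        (c.blocks.map fun ki =>
          (-1 : ℤ) ^ (ki - 1) * ((ki + N - 1).choose ki : ℤ)).prod) = 1 := by
  letI : Unique (Composition 0) :=
    { default := Composition.ones 0
      uniq := fun c => by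
        apply Composition.ext
        have hs := c.blocks_sum
        cases h : c.blocks with
        | nil => simp [Composition.ones, h]
        | cons b t =>
            have hb : 0 < b := c.blocks_pos (by rw [h]; exact List.mem_cons_self)
            rw [h] at hs
            simp at hs
            omega }
  rw [Fintype.sum_unique]
  show (((Composition.ones 0).blocks).map fun ki =>
          (-1 : ℤ) ^ (ki - 1) * ((ki + N - 1).choose ki : ℤ)).prod = 1
  simp [Composition.ones]

lemma compMain (N : ℕ) (hN : 0 < N) : ∀ k,
    (∑ c : Composition k,
        (c.blocks.map fun ki =>
          (-1 : ℤ) ^ (ki - 1) * ((ki + N - 1).choose ki : ℤ)).prod) = (N.choose k : ℤ) := by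
  intro k
  induction k using Nat.strong_induction_on with
  | _ k IH =>
    rcases Nat.eq_zero_or_pos k with rfl | hk
    · simpa using compZero N
    · rw [compRec N k hk]
      have h0 := myConv N k hN hk
      rw [Finset.sum_range_succ'] at h0
      simp only [pow_zero, one_mul, Nat.sub_zero, Nat.choose_zero_right, Nat.cast_one,
        Nat.zero_add] at h0
      have hG : ∀ j ∈ Finset.range k,
          ((-1 : ℤ) ^ (k - j - 1) * (((k - j) + N - 1).choose (k - j) : ℤ)) *
            (∑ c : Composition j,
              (c.blocks.map fun ki =>
                (-1 : ℤ) ^ (ki - 1) * ((ki + N - 1).choose ki : ℤ)).prod)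
          = ((-1 : ℤ) ^ (k - j - 1) * (((k - j) + N - 1).choose (k - j) : ℤ)) * (N.choose j : ℤ) := by
        intro j hj
        rw [IH j (Finset.mem_range.1 hj)]
      rw [Finset.sum_congr rfl hG]
      have hre := Finset.sum_range_reflect
        (fun j => ((-1 : ℤ) ^ (k - j - 1) * (((k - j) + N - 1).choose (k - j) : ℤ)) * (N.choose j : ℤ)) k
      rw [← hre]
      have hterm : ∀ i ∈ Finset.range k,
          ((-1 : ℤ) ^ (k - (k - 1 - i) - 1) * (((k - (k - 1 - i)) + N - 1).choose (k - (k - 1 - i)) : ℤ))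
            * (N.choose (k - 1 - i) : ℤ)
          = -((-1 : ℤ) ^ (i + 1) * (((i + 1) + N - 1).choose (i + 1) : ℤ) * (N.choose (k - (i + 1)) : ℤ)) := by
        intro i hi
        have hik : i < k := Finset.mem_range.1 hi
        rw [show k - (k - 1 - i) = i + 1 by omega, show k - (i + 1) = k - 1 - i by omega]
        simp [pow_succ]
      rw [Finset.sum_congr rfl hterm]
      rw [Finset.sum_neg_distrib]
      linarith [h0]

theorem sum_compositions_signed_binomial_inverse
    (k N : ℕ) (hk : 0 < k) (hN : 0 < N) :
    (∑ c : Composition k,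
        (c.blocks.map fun ki =>
          (-1 : ℤ) ^ (ki - 1) * ((ki + N - 1).choose ki : ℤ)).prod)
      = (N.choose k : ℤ) ∧
    (k = N →
      (∑ c : Composition k,
        (c.blocks.map fun ki =>
          (-1 : ℤ) ^ (ki - 1) * ((ki + N - 1).choose ki : ℤ)).prod) = 1) ∧
    (k > N →
      (∑ c : Composition k,
        (c.blocks.map fun ki =>
          (-1 : ℤ) ^ (ki - 1) * ((ki + N - 1).choose ki : ℤ)).prod) = 0) := by
  refine ⟨compMain N hN k, fun h => ?_, fun h => ?_⟩
  · rw [compMain N hN k, h, Nat.choose_self]; norm_num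
  · rw [compMain N hN k, Nat.choose_eq_zero_of_lt h]; norm_num
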